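/- Let F be the (M+1) × (M+1) real matrix whose first row is (0, β_1⁰, β_2⁰, …, β_M⁰) and all other entries are zero, and let V be the (M+1) × (M+1) real matrix with first row (η+μ, 0, …, 0), first column (η+μ, −η_1, …, −η_M)ᵀ, diagonal entries V_{i+1,i+1} = γ_i + μ for i = 1,…,M, and all other entries zero. Assume η + μ > 0 and γ_i + μ > 0 for all i. Then the characteristic polynomial of the next-generation matrix F·V⁻¹ equals X^M · (X − ℛ₀), where ℛ₀ = Σ_{i=1}^M β_i⁰ η_i / ((γ_i + μ)(η + μ)). In particular, the eigenvalues of F·V⁻¹ are 0 (with multiplicity M) and ℛ₀. -/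

import Mathlib

open Polynomial

/-- The characteristic polynomial of the next-generation matrix `F·V⁻¹` of the
multi-variant SEIR model is `X^M · (X − ℛ₀)`; in particular its eigenvalues are
`0` (with multiplicity `M`) and `ℛ₀`. -/
theorem next_generation_charpoly
    (M : ℕ) (hM : 1 ≤ M) (μ η : ℝ) (hμ : 0 ≤ μ)
    (β0 ηv γ : Fin M → ℝ) (hβ0 : ∀ i, 0 ≤ β0 i) (hηv : ∀ i, 0 ≤ ηv i)
    (hγ : ∀ i, 0 ≤ γ i) (hη : η = ∑ i, ηv i)
    (hημ : 0 < η + μ) (hγμ : ∀ i, 0 < γ i + μ)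
    (F V : Matrix (Fin (M + 1)) (Fin (M + 1)) ℝ)
    (hF00 : F 0 0 = 0)
    (hF0row : ∀ j : Fin M, F 0 j.succ = β0 j)
    (hFrest : ∀ (i : Fin M) (j : Fin (M + 1)), F i.succ j = 0)
    (hV00 : V 0 0 = η + μ)
    (hV0row : ∀ j : Fin M, V 0 j.succ = 0)
    (hVcol : ∀ i : Fin M, V i.succ 0 = -ηv i)
    (hVdiag : ∀ i : Fin M, V i.succ i.succ = γ i + μ)
    (hVoff : ∀ i j : Fin M, i ≠ j → V i.succ j.succ = 0) :
    (F * V⁻¹).charpoly =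
      X ^ M * (X - C (∑ i, β0 i * ηv i / ((γ i + μ) * (η + μ)))) := by
  -- explicit inverse of V
  set W : Matrix (Fin (M + 1)) (Fin (M + 1)) ℝ := Matrix.of fun i j =>
    Fin.cases
      (Fin.cases ((η + μ)⁻¹) (fun _ => 0) j)
      (fun i' => Fin.cases (ηv i' / ((γ i' + μ) * (η + μ)))
        (fun j' => if i' = j' then (γ i' + μ)⁻¹ else 0) j) i with hW
  have hW00 : W 0 0 = (η + μ)⁻¹ := rfl
  have hW0row : ∀ j : Fin M, W 0 j.succ = 0 := fun j => rfl
  have hWcol : ∀ i : Fin M, W i.succ 0 = ηv i / ((γ i + μ) * (η + μ)) := fun i => rfl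
  have hWdiag : ∀ i : Fin M, W i.succ i.succ = (γ i + μ)⁻¹ := fun i => by
    simp [hW]
  have hWoff : ∀ i j : Fin M, i ≠ j → W i.succ j.succ = 0 := fun i j h => by
    simp [hW, h]
  have hVW : V * W = 1 := by
    ext i j
    rw [Matrix.mul_apply, Fin.sum_univ_succ]
    induction i using Fin.cases with
    | zero =>
      induction j using Fin.cases with
      | zero =>
        simp only [hV00, hW00, hV0row, zero_mul, Finset.sum_const_zero, add_zero,
          Matrix.one_apply_eq]
        field_simp
      | succ j =>
        simp [hV0row, hW0row, Matrix.one_apply, (Fin.succ_ne_zero j).symm]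
    | succ i =>
      induction j using Fin.cases with
      | zero =>
        rw [Finset.sum_eq_single i]
        · simp only [hVcol, hW00, hVdiag, hWcol, Matrix.one_apply,
            (Fin.succ_ne_zero i), if_neg (Fin.succ_ne_zero i)]
          have h1 : (γ i + μ) ≠ 0 := (hγμ i).ne'
          have h2 : (η + μ) ≠ 0 := hημ.ne'
          field_simp
          simp
        · intro b _ hb
          rw [hVoff i b (fun h => hb (h ▸ rfl)), zero_mul]
        · simp
      | succ j =>
        rw [Finset.sum_eq_single i]
        · by_cases h : i = j
          · subst h
            simp only [hVcol, hW0row, mul_zero, hVdiag, hWdiag, zero_add,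
              Matrix.one_apply_eq]
            exact div_self (hγμ i).ne'
          · simp only [hVcol, hW0row, mul_zero, hVdiag, hWoff i j h, mul_zero, zero_add,
              Matrix.one_apply]
            rw [if_neg (by simpa [Fin.succ_inj] using h)]
        · intro b _ hb
          rw [hVoff i b (fun h => hb (h ▸ rfl)), zero_mul]
        · simp
  have hVinv : V⁻¹ = W := Matrix.inv_eq_right_inv hVW
  rw [hVinv]
  -- F * W has nonzero entries only in the first row
  have hA : ∀ (i : Fin M) (j : Fin (M + 1)), (F * W) i.succ j = 0 := by
    intro i j
    rw [Matrix.mul_apply]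
    exact Finset.sum_eq_zero fun k _ => by rw [hFrest i k, zero_mul]
  have hA00 : (F * W) 0 0 = ∑ i, β0 i * ηv i / ((γ i + μ) * (η + μ)) := by
    rw [Matrix.mul_apply, Fin.sum_univ_succ, hF00, zero_mul, zero_add]
    exact Finset.sum_congr rfl fun i _ => by
      rw [hF0row, hWcol, mul_div_assoc]
  -- charmatrix of F*W is upper triangular
  have hBT : ((F * W).charmatrix).BlockTriangular id := by
    intro i j hij
    have hi0 : i ≠ 0 := by
      rintro rfl; exact absurd hij (by simp [Fin.lt_iff_val_lt_val])
    obtain ⟨i', rfl⟩ := Fin.exists_succ_eq.mpr hi0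
    have hne : i'.succ ≠ j := by
      intro h; subst h; exact lt_irrefl _ hij
    rw [Matrix.charmatrix_apply_ne _ _ _ hne, hA, map_zero, neg_zero]
  rw [Matrix.charpoly, Matrix.det_of_upperTriangular hBT]
  rw [Fin.prod_univ_succ]
  have h1 : ((F * W).charmatrix) 0 0 = X - C ((F * W) 0 0) := by
    rw [Matrix.charmatrix_apply_eq]
  have h2 : ∀ i : Fin M, ((F * W).charmatrix) i.succ i.succ = X := by
    intro i
    rw [Matrix.charmatrix_apply_eq, hA, map_zero, sub_zero]
  rw [h1, hA00]
  rw [Finset.prod_congr rfl fun i _ => h2 i, Finset.prod_const, Finset.card_univ,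
    Fintype.card_fin, mul_comm]
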